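/- Upper bound on the signal strength (Lemma C.8). Let A ∈ ℝ^{p×K} (p, K ≥ 1) with every row of A having ℓ1-norm at most 1, and let Σ_Z be a K×K symmetric positive semidefinite matrix whose entries satisfy max_{a,b} |[Σ_Z]_{ab}| ≤ B_z. Then the K-th largest eigenvalue of A Σ_Z Aᵀ, which equals the smallest eigenvalue of the K×K matrix Σ_Z^{1/2} Aᵀ A Σ_Z^{1/2}, satisfies λ_min( Σ_Z^{1/2} Aᵀ A Σ_Z^{1/2} ) ≤ B_z · p / K. -/

import Mathlib

open Matrix

section OldSqrt

open scoped ComplexOrder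

/-- The positive semidefinite square root of a positive semidefinite matrix, as defined in
Mathlib (December 2024); Mathlib has since removed `Matrix.PosSemidef.sqrt`. -/
noncomputable def Matrix.PosSemidef.sqrt {n 𝕜 : Type*} [Fintype n] [RCLike 𝕜] [DecidableEq n]
    {A : Matrix n n 𝕜} (hA : A.PosSemidef) : Matrix n n 𝕜 :=
  hA.1.eigenvectorUnitary.1 * diagonal ((↑) ∘ (√·) ∘ hA.1.eigenvalues) *
  (star hA.1.eigenvectorUnitary : Matrix n n 𝕜)

end OldSqrt

theorem Matrix.PosSemidef.sqrt_mul_self' {n : Type*} [Fintype n] [DecidableEq n]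
    {A : Matrix n n ℝ} (hA : A.PosSemidef) : hA.sqrt * hA.sqrt = A := by
  have hU : (star (hA.1.eigenvectorUnitary : Matrix n n ℝ)) * (hA.1.eigenvectorUnitary : Matrix n n ℝ) = 1 :=
    hA.1.eigenvectorUnitary.2.1
  unfold Matrix.PosSemidef.sqrt
  conv_rhs => rw [hA.1.spectral_theorem, Unitary.conjStarAlgAut_apply]
  rw [show ∀ a b c d e f : Matrix n n ℝ, a * b * c * (d * e * f) = a * b * (c * d) * e * f by
    intro a b c d e f; simp only [Matrix.mul_assoc], hU, Matrix.mul_one,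
    Matrix.mul_assoc _ (diagonal _) (diagonal _), diagonal_mul_diagonal]
  congr 3
  funext i
  simp [Real.mul_self_sqrt (hA.eigenvalues_nonneg i)]

theorem trace_eq_sum_eigenvalues {n : Type*} [Fintype n] [DecidableEq n]
    {M : Matrix n n ℝ} (hM : M.IsHermitian) : M.trace = ∑ i, hM.eigenvalues i := by
  conv_lhs => rw [hM.spectral_theorem]
  rw [Unitary.conjStarAlgAut_apply]
  rw [Matrix.trace_mul_cycle]
  have : (star (hM.eigenvectorUnitary : Matrix n n ℝ)) * (hM.eigenvectorUnitary : Matrix n n ℝ) = 1 :=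
    hM.eigenvectorUnitary.2.1
  rw [this, Matrix.one_mul, Matrix.trace_diagonal]
  simp

/-- Lemma C.8: upper bound on the signal strength.  If every row of `A` has ℓ1-norm at
most 1 and the entries of the positive semidefinite matrix `Σ_Z` are bounded by `B_z`,
then the smallest eigenvalue of `Σ_Z^{1/2} Aᵀ A Σ_Z^{1/2}` (the `K`-th largest
eigenvalue of `A Σ_Z Aᵀ`) is at most `B_z · p / K`. -/
theorem signal_strength_upper_bound {p K : ℕ} (hp : 1 ≤ p) (hK : 1 ≤ K)
    (A : Matrix (Fin p) (Fin K) ℝ) (S : Matrix (Fin K) (Fin K) ℝ) (Bz : ℝ)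
    (hS : S.PosSemidef) (hBz : ∀ a b, |S a b| ≤ Bz)
    (hA : ∀ j, ∑ k, |A j k| ≤ 1)
    (hM : (hS.sqrt * (Aᵀ * A) * hS.sqrt).IsHermitian)
    (lamK : ℝ) (hlam : IsLeast (Set.range hM.eigenvalues) lamK) :
    lamK ≤ Bz * p / K := by
  have hBz0 : 0 ≤ Bz := le_trans (abs_nonneg _) (hBz ⟨0, hK⟩ ⟨0, hK⟩)
  -- trace bound
  have htr_eq : (hS.sqrt * (Aᵀ * A) * hS.sqrt).trace = (S * (Aᵀ * A)).trace := by
    rw [Matrix.trace_mul_cycle, ← Matrix.mul_assoc, hS.sqrt_mul_self', Matrix.mul_assoc]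
  have htr : (hS.sqrt * (Aᵀ * A) * hS.sqrt).trace ≤ Bz * p := by
    rw [htr_eq]
    have : (S * (Aᵀ * A)).trace = ∑ j, ∑ k, ∑ l, S k l * (A j l * A j k) := by
      simp only [Matrix.trace, Matrix.diag, Matrix.mul_apply, Matrix.transpose_apply,
        Finset.mul_sum]
      calc ∑ k : Fin K, ∑ l : Fin K, ∑ j : Fin p, S k l * (A j l * A j k)
          = ∑ k : Fin K, ∑ j : Fin p, ∑ l : Fin K, S k l * (A j l * A j k) :=
            Finset.sum_congr rfl fun k _ => Finset.sum_comm
        _ = ∑ j, ∑ k, ∑ l, S k l * (A j l * A j k) := Finset.sum_comm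
    rw [this]
    calc ∑ j, ∑ k, ∑ l, S k l * (A j l * A j k)
        ≤ ∑ j : Fin p, Bz * ((∑ l, |A j l|) * (∑ k, |A j k|)) := by
          apply Finset.sum_le_sum
          intro j _
          calc ∑ k, ∑ l, S k l * (A j l * A j k)
              ≤ ∑ k, ∑ l, Bz * (|A j l| * |A j k|) := by
                apply Finset.sum_le_sum; intro k _
                apply Finset.sum_le_sum; intro l _
                calc S k l * (A j l * A j k) ≤ |S k l * (A j l * A j k)| := le_abs_self _
                  _ = |S k l| * (|A j l| * |A j k|) := by rw [abs_mul, abs_mul]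
                  _ ≤ Bz * (|A j l| * |A j k|) := by
                      apply mul_le_mul_of_nonneg_right (hBz k l)
                      positivity
            _ = Bz * ((∑ l, |A j l|) * (∑ k, |A j k|)) := by
                rw [Finset.sum_mul, Finset.mul_sum]
                refine Finset.sum_congr rfl fun k _ => ?_
                rw [Finset.mul_sum, Finset.mul_sum]
                exact Finset.sum_congr rfl fun l _ => by ring
      _ ≤ ∑ j : Fin p, Bz * 1 := by
          apply Finset.sum_le_sum
          intro j _
          apply mul_le_mul_of_nonneg_left _ hBz0
          calc (∑ l, |A j l|) * (∑ k, |A j k|) ≤ 1 * 1 := by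
                apply mul_le_mul (hA j) (hA j) (by positivity) zero_le_one
            _ = 1 := one_mul 1
      _ = Bz * p := by simp [mul_comm]
  -- K * lamK ≤ trace
  have hKlam : (K : ℝ) * lamK ≤ (hS.sqrt * (Aᵀ * A) * hS.sqrt).trace := by
    have h1 : (hS.sqrt * (Aᵀ * A) * hS.sqrt).trace = ∑ i, hM.eigenvalues i :=
      trace_eq_sum_eigenvalues hM
    rw [h1]
    calc (K : ℝ) * lamK = ∑ _i : Fin K, lamK := by
          simp [Finset.sum_const, nsmul_eq_mul]
      _ ≤ ∑ i, hM.eigenvalues i := by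
          apply Finset.sum_le_sum
          intro i _
          exact hlam.2 ⟨i, rfl⟩
  have hKpos : (0 : ℝ) < K := by exact_mod_cast hK
  rw [le_div_iff₀ hKpos]
  have := le_trans hKlam htr
  linarith
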